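/- Let G be an ideal of graphs (a class closed under isomorphism and induced subgraphs). If G has the strong Erdős–Hajnal property, then G has the Erdős–Hajnal property: that is, if there exists ε > 0 such that every graph G ∈ 𝒢 with at least two vertices contains disjoint sets A, B of size at least ε|G| that are either complete or anticomplete to each other, then there exists c > 0 such that every G ∈ 𝒢 has a clique or stable set of size at least |G|^c. -/

import Mathlib

open Finset

open scoped Classical

variable {V : Type*}

/-- No edges between `A` and `B`. -/
def Anticomplete (G : SimpleGraph V) (A B : Finset V) : Prop :=
  ∀ a ∈ A, ∀ b ∈ B, ¬ G.Adj a b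

/-- All edges between `A` and `B` are present. -/
def CompletePair (G : SimpleGraph V) (A B : Finset V) : Prop :=
  ∀ a ∈ A, ∀ b ∈ B, G.Adj a b

/-- `G` is `ε`-coherent. -/
def Coherent (G : SimpleGraph V) [Fintype V] (ε : ℝ) : Prop :=
  1 < Fintype.card V ∧
  (∀ v : V, (G.degree v : ℝ) < ε * Fintype.card V) ∧
  ¬ ∃ A B : Finset V, Disjoint A B ∧ Anticomplete G A B ∧
      ε * Fintype.card V ≤ A.card ∧ ε * Fintype.card V ≤ B.card

/-- `G` contains an induced copy of `H`. -/
def Contains {W : Type*} (G : SimpleGraph V) (H : SimpleGraph W) : Prop :=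
  ∃ f : W ↪ V, ∀ a b, G.Adj (f a) (f b) ↔ H.Adj a b

/-- Size of the largest clique. -/
noncomputable def cliqueNumber (G : SimpleGraph V) [Fintype V] : ℕ :=
  sSup {n | ∃ s : Finset V, G.IsNClique n s}

/-- A blockade: pairwise disjoint nonempty blocks. -/
def IsBlockade {K : ℕ} (B : Fin K → Finset V) : Prop :=
  (∀ i, (B i).Nonempty) ∧ Pairwise fun i j => Disjoint (B i) (B j)

/-- Width of a blockade: minimum block size. -/
noncomputable def blockWidth {K : ℕ} (B : Fin K → Finset V) : ℕ :=
  ⨅ i, (B i).card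

/-- A rainbow copy of the ordered graph `J` with blocks given by the strictly
monotone map `ι`. -/
def RainbowCopy (G : SimpleGraph V) {K : ℕ} (B : Fin K → Finset V) {m : ℕ}
    (J : SimpleGraph (Fin m)) (ι : Fin m → Fin K) : Prop :=
  StrictMono ι ∧ ∃ f : Fin m → V, (∀ a, f a ∈ B (ι a)) ∧
    ∀ a b, G.Adj (f a) (f b) ↔ J.Adj a b

/-- The trace of the ordered graph `J` relative to a blockade. -/
def Trace (G : SimpleGraph V) {K : ℕ} (B : Fin K → Finset V) {m : ℕ}
    (J : SimpleGraph (Fin m)) : Set (Fin m → Fin K) :=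
  {ι | RainbowCopy G B J ι}

/-- `τ`-support-uniform: for every ordered tree with at most `τ` vertices, the
trace is empty or everything. -/
def SupportUniform (G : SimpleGraph V) {K : ℕ} (B : Fin K → Finset V) (τ : ℕ) : Prop :=
  ∀ m : ℕ, m ≤ τ → ∀ J : SimpleGraph (Fin m), J.IsTree →
    Trace G B J = ∅ ∨ Trace G B J = {ι | StrictMono ι}

/-- `B'` is a contraction of `B`. -/
def IsContraction {K : ℕ} (B' B : Fin K → Finset V) : Prop :=
  ∀ i, (B' i).Nonempty ∧ B' i ⊆ B i

/-- `(κ, τ)`-support-invariant: contractions of width at least `κ` times the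
width have the same traces of ordered trees with at most `τ` vertices. -/
def SupportInvariant (G : SimpleGraph V) {K : ℕ} (B : Fin K → Finset V)
    (κ : ℝ) (τ : ℕ) : Prop :=
  ∀ B' : Fin K → Finset V, IsContraction B' B →
    (∀ i, κ * blockWidth B ≤ ((B' i).card : ℝ)) →
    ∀ m : ℕ, m ≤ τ → ∀ J : SimpleGraph (Fin m), J.IsTree →
      Trace G B' J = Trace G B J

/-- `X` `lam`-covers the block `Bi` (with respect to width `w`). -/
def Covers (G : SimpleGraph V) (X Bi : Finset V) (lam : ℝ) (w : ℕ) : Prop :=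
  lam * w ≤ ((Bi.filter fun v => ∃ x ∈ X, G.Adj x v).card : ℝ)

/-- `X` `lam`-misses the block `Bi` (with respect to width `w`). -/
def Misses (G : SimpleGraph V) (X Bi : Finset V) (lam : ℝ) (w : ℕ) : Prop :=
  lam * w ≤ ((Bi.filter fun v => ∀ x ∈ X, ¬ G.Adj x v).card : ℝ)

/-- `lam`-concave (for an equicardinal blockade of width `w`). -/
def Concave (G : SimpleGraph V) {K : ℕ} (B : Fin K → Finset V) (lam : ℝ) (w : ℕ) : Prop :=
  ∀ h1 h2 h3 : Fin K, h1 < h2 → h2 < h3 →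
    ∀ X : Finset V,
      (∀ x ∈ X, ∃ i : Fin K, i ≠ h1 ∧ i ≠ h2 ∧ i ≠ h3 ∧ x ∈ B i) →
      ¬ (Covers G X (B h2) lam w ∧ Misses G X (B h1) lam w ∧ Misses G X (B h3) lam w)

/-- `G` contains a `B`-rainbow induced copy of `T`. -/
def RainbowContains (G : SimpleGraph V) {K : ℕ} (B : Fin K → Finset V)
    {W' : Type*} (T : SimpleGraph W') : Prop :=
  ∃ f : W' ↪ V,
    (∀ a b, G.Adj (f a) (f b) ↔ T.Adj a b) ∧
    (∀ a, ∃ i, f a ∈ B i) ∧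
    ∀ a b, a ≠ b → ∀ i, f a ∈ B i → f b ∉ B i

/-- Vertices of the tree `T(δ, η)`: sequences of length at most `η` over `Fin δ`. -/
def Tvert (δ η : ℕ) : Type := {l : List (Fin δ) // l.length ≤ η}

/-- The tree `T(δ, η)` rooted at the empty sequence: every vertex of depth
`< η` has exactly `δ` children, and all leaves are at depth exactly `η`. -/
def Ttree (δ η : ℕ) : SimpleGraph (Tvert δ η) :=
  SimpleGraph.fromRel fun a b => ∃ x : Fin δ, b.1 = x :: a.1

theorem stmt6 (𝒢 : ∀ n : ℕ, SimpleGraph (Fin n) → Prop)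
    (hideal : ∀ (n m : ℕ) (G : SimpleGraph (Fin n)) (H : SimpleGraph (Fin m)),
      𝒢 n G → Contains G H → 𝒢 m H)
    (ε : ℝ) (hε : 0 < ε)
    (hstrong : ∀ (n : ℕ) (G : SimpleGraph (Fin n)), 𝒢 n G → 2 ≤ n →
      ∃ A B : Finset (Fin n), Disjoint A B ∧
        ε * n ≤ A.card ∧ ε * n ≤ B.card ∧
        (CompletePair G A B ∨ Anticomplete G A B)) :
    ∃ c : ℝ, 0 < c ∧ ∀ (n : ℕ) (G : SimpleGraph (Fin n)), 𝒢 n G →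
      ∃ s : Finset (Fin n), (G.IsClique ↑s ∨ Gᶜ.IsClique ↑s) ∧
        (n : ℝ) ^ c ≤ (s.card : ℝ) := by
  
  set ε' : ℝ := min ε (1/2) with hε'def
  have hε'pos : 0 < ε' := lt_min hε (by norm_num)
  have hε'le : ε' ≤ 1/2 := min_le_right _ _
  have hε'lt1 : ε' < 1 := lt_of_le_of_lt hε'le (by norm_num)
  have hlogneg : Real.log ε' < 0 := Real.log_neg hε'pos hε'lt1
  set c' : ℝ := Real.log 2 / (- Real.log ε') with hc'def
  have hc'pos : 0 < c' := div_pos (Real.log_pos (by norm_num)) (by linarith)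
  have hpow : ε' ^ c' = 1/2 := by
    rw [Real.rpow_def_of_pos hε'pos]
    have h1 : Real.log ε' * c' = - Real.log 2 := by
      have hne : Real.log ε' ≠ 0 := ne_of_lt hlogneg
      rw [hc'def]
      field_simp
    rw [h1, Real.exp_neg, Real.exp_log (by norm_num : (0:ℝ) < 2)]
    norm_num
  -- key induction
  have key : ∀ n (G : SimpleGraph (Fin n)), 𝒢 n G →
      ∃ s t : Finset (Fin n), G.IsClique ↑s ∧ Gᶜ.IsClique ↑t ∧
        (n : ℝ) ^ c' ≤ (s.card : ℝ) * (t.card : ℝ) := by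
    intro n
    induction n using Nat.strong_induction_on with
    | _ n IH =>
      intro G hG
      rcases Nat.lt_or_ge n 2 with hn2 | hn2
      · -- n = 0 or 1
        interval_cases n
        · refine ⟨∅, ∅, by simp [SimpleGraph.IsClique], by simp [SimpleGraph.IsClique], ?_⟩
          simp [Real.zero_rpow (ne_of_gt hc'pos)]
        · refine ⟨{0}, {0}, ?_, ?_, ?_⟩
          · simp [SimpleGraph.IsClique]
          · simp [SimpleGraph.IsClique]
          · simp [Real.one_rpow]
      · obtain ⟨A, B, hdisj, hAcard, hBcard, hcase⟩ := hstrong n G hG hn2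
        have hnpos : (0:ℝ) < n := by positivity
        have hA' : ε' * n ≤ A.card := le_trans (by nlinarith [min_le_left ε (1/2)]) hAcard
        have hB' : ε' * n ≤ B.card := le_trans (by nlinarith [min_le_left ε (1/2)]) hBcard
        have hApos : 0 < A.card := by
          by_contra h
          push_neg at h
          interval_cases (A.card)
          · simp at hA'; nlinarith
        have hBpos : 0 < B.card := by
          by_contra h
          push_neg at h
          interval_cases (B.card)
          · simp at hB'; nlinarith
        have hsum : A.card + B.card ≤ n := by
          have := (A ∪ B).card_le_univ
          rw [Finset.card_union_of_disjoint hdisj] at this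
          simpa using this
        have hAlt : A.card < n := by omega
        have hBlt : B.card < n := by omega
        -- step: apply IH to the induced subgraph on a finset C
        have step : ∀ C : Finset (Fin n), C.card < n →
            ∃ s t : Finset (Fin n), s ⊆ C ∧ t ⊆ C ∧ G.IsClique ↑s ∧ Gᶜ.IsClique ↑t ∧
              (C.card : ℝ) ^ c' ≤ (s.card : ℝ) * (t.card : ℝ) := by
          intro C hClt
          set f : Fin C.card ↪ Fin n :=
            (C.orderIsoOfFin rfl).toEquiv.toEmbedding.trans (Function.Embedding.subtype _)
            with hfdef
          have hfC : ∀ a, f a ∈ C := fun a => ((C.orderIsoOfFin rfl) a).2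
          set H : SimpleGraph (Fin C.card) := G.comap f with hHdef
          have hH : 𝒢 C.card H := hideal n C.card G H hG ⟨f, fun a b => Iff.rfl⟩
          obtain ⟨s0, t0, hs0, ht0, hprod⟩ := IH C.card hClt H hH
          refine ⟨s0.map f, t0.map f, ?_, ?_, ?_, ?_, ?_⟩
          · intro x hx
            obtain ⟨a, _, rfl⟩ := Finset.mem_map.mp hx
            exact hfC a
          · intro x hx
            obtain ⟨a, _, rfl⟩ := Finset.mem_map.mp hx
            exact hfC a
          · intro x hx y hy hxy
            simp only [Finset.coe_map, Set.mem_image, Finset.mem_coe] at hx hy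
            obtain ⟨a, ha, rfl⟩ := hx
            obtain ⟨b, hb, rfl⟩ := hy
            have hab : a ≠ b := fun h => hxy (by rw [h])
            exact hs0 ha hb hab
          · intro x hx y hy hxy
            simp only [Finset.coe_map, Set.mem_image, Finset.mem_coe] at hx hy
            obtain ⟨a, ha, rfl⟩ := hx
            obtain ⟨b, hb, rfl⟩ := hy
            have hab : a ≠ b := fun h => hxy (by rw [h])
            have := ht0 ha hb hab
            rw [SimpleGraph.compl_adj] at this ⊢
            exact ⟨hxy, this.2⟩
          · simpa [Finset.card_map] using hprod
        obtain ⟨sA, tA, hsA, htA, hsAc, htAc, hprodA⟩ := step A hAlt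
        obtain ⟨sB, tB, hsB, htB, hsBc, htBc, hprodB⟩ := step B hBlt
        have hsdisj : Disjoint sA sB := hdisj.mono hsA hsB
        have htdisj : Disjoint tA tB := hdisj.mono htA htB
        -- lower bounds on products
        have hhalf : ∀ (C : Finset (Fin n)), ε' * n ≤ C.card →
            (1/2 : ℝ) * (n:ℝ) ^ c' ≤ (C.card : ℝ) ^ c' := by
          intro C hC
          have h1 : ((ε' * n) : ℝ) ^ c' ≤ (C.card : ℝ) ^ c' :=
            Real.rpow_le_rpow (by positivity) hC hc'pos.le
          rwa [Real.mul_rpow hε'pos.le hnpos.le, hpow] at h1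
        have hprodA' : (1/2 : ℝ) * (n:ℝ) ^ c' ≤ (sA.card : ℝ) * (tA.card : ℝ) :=
          le_trans (hhalf A hA') hprodA
        have hprodB' : (1/2 : ℝ) * (n:ℝ) ^ c' ≤ (sB.card : ℝ) * (tB.card : ℝ) :=
          le_trans (hhalf B hB') hprodB
        rcases hcase with hcomp | hanti
        · -- complete: union of cliques, bigger stable set
          have hclique : G.IsClique ↑(sA ∪ sB) := by
            intro x hx y hy hxy
            simp only [Finset.coe_union, Set.mem_union, Finset.mem_coe] at hx hy
            rcases hx with hx | hx <;> rcases hy with hy | hy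
            · exact hsAc hx hy hxy
            · exact hcomp x (hsA hx) y (hsB hy)
            · exact (hcomp y (hsA hy) x (hsB hx)).symm
            · exact hsBc hx hy hxy
          have hcard : ((sA ∪ sB).card : ℝ) = sA.card + sB.card := by
            rw [Finset.card_union_of_disjoint hsdisj]; push_cast; ring
          rcases le_total (tA.card : ℝ) (tB.card : ℝ) with hle | hle
          · refine ⟨sA ∪ sB, tB, hclique, htBc, ?_⟩
            rw [hcard]
            calc (n:ℝ) ^ c' = 1/2 * (n:ℝ)^c' + 1/2 * (n:ℝ)^c' := by ring
              _ ≤ (sA.card:ℝ) * tA.card + (sB.card:ℝ) * tB.card := add_le_add hprodA' hprodB'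
              _ ≤ (sA.card:ℝ) * tB.card + (sB.card:ℝ) * tB.card := by
                  gcongr
              _ = ((sA.card:ℝ) + sB.card) * tB.card := by ring
          · refine ⟨sA ∪ sB, tA, hclique, htAc, ?_⟩
            rw [hcard]
            calc (n:ℝ) ^ c' = 1/2 * (n:ℝ)^c' + 1/2 * (n:ℝ)^c' := by ring
              _ ≤ (sA.card:ℝ) * tA.card + (sB.card:ℝ) * tB.card := add_le_add hprodA' hprodB'
              _ ≤ (sA.card:ℝ) * tA.card + (sB.card:ℝ) * tA.card := by
                  gcongr
              _ = ((sA.card:ℝ) + sB.card) * tA.card := by ring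
        · -- anticomplete: union of stable sets, bigger clique
          have hstable : Gᶜ.IsClique ↑(tA ∪ tB) := by
            intro x hx y hy hxy
            simp only [Finset.coe_union, Set.mem_union, Finset.mem_coe] at hx hy
            rw [SimpleGraph.compl_adj]
            rcases hx with hx | hx <;> rcases hy with hy | hy
            · exact ⟨hxy, ((htAc hx hy hxy).2)⟩
            · exact ⟨hxy, hanti x (htA hx) y (htB hy)⟩
            · exact ⟨hxy, fun h => hanti y (htA hy) x (htB hx) h.symm⟩
            · exact ⟨hxy, ((htBc hx hy hxy).2)⟩
          have hcard : ((tA ∪ tB).card : ℝ) = tA.card + tB.card := by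
            rw [Finset.card_union_of_disjoint htdisj]; push_cast; ring
          rcases le_total (sA.card : ℝ) (sB.card : ℝ) with hle | hle
          · refine ⟨sB, tA ∪ tB, hsBc, hstable, ?_⟩
            rw [hcard]
            calc (n:ℝ) ^ c' = 1/2 * (n:ℝ)^c' + 1/2 * (n:ℝ)^c' := by ring
              _ ≤ (sA.card:ℝ) * tA.card + (sB.card:ℝ) * tB.card := add_le_add hprodA' hprodB'
              _ ≤ (sB.card:ℝ) * tA.card + (sB.card:ℝ) * tB.card := by
                  gcongr
              _ = (sB.card:ℝ) * ((tA.card:ℝ) + tB.card) := by ring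
          · refine ⟨sA, tA ∪ tB, hsAc, hstable, ?_⟩
            rw [hcard]
            calc (n:ℝ) ^ c' = 1/2 * (n:ℝ)^c' + 1/2 * (n:ℝ)^c' := by ring
              _ ≤ (sA.card:ℝ) * tA.card + (sB.card:ℝ) * tB.card := add_le_add hprodA' hprodB'
              _ ≤ (sA.card:ℝ) * tA.card + (sA.card:ℝ) * tB.card := by
                  gcongr
              _ = (sA.card:ℝ) * ((tA.card:ℝ) + tB.card) := by ring
  -- conclude
  refine ⟨c' / 2, by positivity, ?_⟩
  intro n G hG
  obtain ⟨s, t, hs, ht, hprod⟩ := key n G hG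
  rcases Nat.eq_zero_or_pos n with rfl | hnpos
  · refine ⟨∅, Or.inl (by simp [SimpleGraph.IsClique]), ?_⟩
    simp [Real.zero_rpow (by positivity : c'/2 ≠ 0)]
  · have hn0 : (0:ℝ) < n := by positivity
    have hsq : (n:ℝ) ^ (c'/2) * (n:ℝ) ^ (c'/2) = (n:ℝ) ^ c' := by
      rw [← Real.rpow_add hn0]; ring_nf
    have hrpos : (0:ℝ) ≤ (n:ℝ) ^ (c'/2) := Real.rpow_nonneg hn0.le _
    rcases le_total (s.card : ℝ) (t.card : ℝ) with hle | hle
    · refine ⟨t, Or.inr ht, ?_⟩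
      by_contra hlt
      push_neg at hlt
      nlinarith [(Nat.cast_nonneg s.card : (0:ℝ) ≤ (s.card:ℝ)), (Nat.cast_nonneg t.card : (0:ℝ) ≤ (t.card:ℝ))]
    · refine ⟨s, Or.inl hs, ?_⟩
      by_contra hlt
      push_neg at hlt
      nlinarith [(Nat.cast_nonneg s.card : (0:ℝ) ≤ (s.card:ℝ)), (Nat.cast_nonneg t.card : (0:ℝ) ≤ (t.card:ℝ))]
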